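/- Let X be a metric space, Ω ⊆ X open and connected, and C ⊆ X closed with C ∩ Ω ≠ ∅ and Ω not contained in C. Then the boundary of C intersects Ω, and the set Ω' = {x ∈ Ω \ C : dist(x, C) < dist(x, ∂Ω)} is a nonempty open subset of Ω. -/

import Mathlib

open EMetric Metric Set ENNReal

theorem stmt11 {X : Type*} [MetricSpace X]
    (Ω : Set X) (hΩo : IsOpen Ω) (hΩc : IsConnected Ω)
    (C : Set X) (hC : IsClosed C) (hne : (C ∩ Ω).Nonempty) (hns : ¬ Ω ⊆ C)
    (Ω' : Set X)
    (hΩ' : Ω' = {x | x ∈ Ω \ C ∧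
      EMetric.infEdist x C < EMetric.infEdist x (frontier Ω)}) :
    (frontier C ∩ Ω).Nonempty ∧ Ω'.Nonempty ∧ IsOpen Ω' ∧ Ω' ⊆ Ω := by
  -- Step 1: frontier C ∩ Ω is nonempty
  have hfront : (frontier C ∩ Ω).Nonempty := by
    by_contra h
    rw [Set.not_nonempty_iff_eq_empty] at h
    have hsub : Ω ⊆ interior C ∪ Cᶜ := by
      intro x hx
      by_cases hxC : x ∈ C
      · left
        have hnf : x ∉ frontier C := fun hf =>
          Set.eq_empty_iff_forall_notMem.mp h x ⟨hf, hx⟩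
        rw [hC.frontier_eq] at hnf
        simpa [Set.mem_diff, hxC] using hnf
      · exact Or.inr hxC
    obtain ⟨c, hcC, hcΩ⟩ := hne
    have hcint : c ∈ interior C := by
      rcases hsub hcΩ with h1 | h1
      · exact h1
      · exact absurd hcC h1
    obtain ⟨w, hwΩ, hwC⟩ : ∃ w ∈ Ω, w ∉ C := by
      simpa [Set.subset_def] using hns
    obtain ⟨z, _, hz1, hz2⟩ := hΩc.isPreconnected (interior C) Cᶜ isOpen_interior hC.isOpen_compl hsub
      ⟨c, hcΩ, hcint⟩ ⟨w, hwΩ, hwC⟩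
    exact hz2 (interior_subset hz1)
  refine ⟨hfront, ?_, ?_, ?_⟩
  -- Step 2: Ω' is nonempty
  · obtain ⟨y, hyfC, hyΩ⟩ := hfront
    obtain ⟨δ, hδpos, hδ⟩ := Metric.isOpen_iff.mp hΩo y hyΩ
    set r : ℝ≥0∞ := EMetric.infEdist y (frontier Ω) with hr
    have hrpos : 0 < r := by
      rw [hr]; refine EMetric.infEdist_pos_iff_notMem_closure.mpr ?_; rw [
        isClosed_frontier.closure_eq, hΩo.frontier_eq]
      exact fun hf => hf.2 hyΩ
    -- choose ε
    set ε : ℝ≥0∞ := min (ENNReal.ofReal δ) (r / 3) with hε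
    have hεpos : 0 < ε := lt_min (ENNReal.ofReal_pos.mpr hδpos)
      (ENNReal.div_pos hrpos.ne' (by norm_num))
    -- y ∈ closure Cᶜ
    have hyCc : y ∈ closure Cᶜ := by
      have h2 : y ∈ (interior C)ᶜ := (hC.frontier_eq ▸ hyfC).2
      rwa [← closure_compl] at h2
    obtain ⟨x, hxC, hyx⟩ := EMetric.mem_closure_iff.mp hyCc ε hεpos
    have hxy' : edist x y < ε := by rwa [edist_comm] at hyx
    have hxΩ : x ∈ Ω := by
      apply hδ
      rw [Metric.mem_ball]
      have : edist x y < ENNReal.ofReal δ := lt_of_lt_of_le hxy' (min_le_left _ _)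
      rw [edist_lt_ofReal] at this
      exact this
    -- infEdist x C < infEdist x (frontier Ω)
    have hC1 : EMetric.infEdist x C < ε :=
      lt_of_le_of_lt (EMetric.infEdist_le_edist_of_mem (frontier_subset_closure.trans hC.closure_subset hyfC)) hxy'
    have hεle : ε ≤ EMetric.infEdist x (frontier Ω) := by
      by_contra hlt
      push_neg at hlt
      have htri : r ≤ EMetric.infEdist x (frontier Ω) + edist x y := by
        rw [hr, edist_comm]
        exact (EMetric.infEdist_le_infEdist_add_edist)
      have h2ε : r < ε + ε := lt_of_le_of_lt htri (ENNReal.add_lt_add hlt hxy')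
      have hεfin : ε ≠ ⊤ := by
        have : ε ≤ ENNReal.ofReal δ := min_le_left _ _
        exact ne_top_of_le_ne_top ENNReal.ofReal_ne_top this
      rcases eq_or_ne r ⊤ with hrt | hrt
      · rw [hrt] at h2ε
        exact absurd h2ε (not_lt.mpr le_top)
      · have hε3 : ε ≤ r / 3 := min_le_right _ _
        have : r < r / 3 + r / 3 := lt_of_lt_of_le h2ε (add_le_add hε3 hε3)
        have h23 : r / 3 + r / 3 ≤ 2 * r / 3 := by
          rw [two_mul, ENNReal.add_div]
        have : r < 2 * r / 3 := lt_of_lt_of_le this h23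
        have : (3 : ℝ≥0∞) * r < 2 * r := by
          calc (3 : ℝ≥0∞) * r = r * 3 := by ring
          _ < 2 * r / 3 * 3 := by
            exact ENNReal.mul_lt_mul_left (by norm_num) (by norm_num) this
          _ = 2 * r := by
            rw [ENNReal.div_mul_cancel (by norm_num) (by norm_num)]
        have := lt_of_le_of_lt (mul_le_mul_left (by norm_num : (2:ℝ≥0∞) ≤ 3) r) this
        exact lt_irrefl _ this
    refine ⟨x, ?_⟩
    rw [hΩ']
    exact ⟨⟨hxΩ, hxC⟩, lt_of_lt_of_le hC1 hεle⟩
  -- Step 3: openness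
  · rw [hΩ']
    have : {x | x ∈ Ω \ C ∧
        EMetric.infEdist x C < EMetric.infEdist x (frontier Ω)}
        = (Ω ∩ Cᶜ) ∩ {x | EMetric.infEdist x C < EMetric.infEdist x (frontier Ω)} := by
      ext x; simp only [Set.mem_setOf_eq, Set.mem_diff, Set.mem_inter_iff, Set.mem_compl_iff]
    rw [this]
    exact ((hΩo.inter hC.isOpen_compl).inter
      (isOpen_lt EMetric.continuous_infEdist EMetric.continuous_infEdist))
  · rw [hΩ']
    exact fun x hx => hx.1.1
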